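/- Lemma (fourth central moment of the HT mean, non-asymptotic form of Lemma A.1): Suppose λ ≤ π_k for every k ∈ U with λ > 0 and |y_k| ≤ C for every k ∈ U. Suppose further that |E[(I_i − π_i)²(I_k − π_k)(I_l − π_l)]| ≤ M₃ for all pairwise distinct i, k, l ∈ U, and |E[(I_i − π_i)(I_j − π_j)(I_k − π_k)(I_l − π_l)]| ≤ M₄ for all pairwise distinct i, j, k, l ∈ U. Then E[(N⁻¹ t̂_HT − N⁻¹ t_y)⁴] ≤ (C/λ)⁴ · (1/N³ + 7/N² + 6 M₃ / N + M₄). -/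

import Mathlib

open MeasureTheory

section Aux

theorem classify4 {α : Type*} [DecidableEq α] (i j k l : α) :
    (i ≠ j ∧ i ≠ k ∧ i ≠ l ∧ j ≠ k ∧ j ≠ l ∧ k ≠ l) ∨
    ((i = j ∧ i ≠ k ∧ i ≠ l ∧ k ≠ l) ∨ (i = k ∧ i ≠ j ∧ i ≠ l ∧ j ≠ l) ∨
     (i = l ∧ i ≠ j ∧ i ≠ k ∧ j ≠ k) ∨ (j = k ∧ i ≠ j ∧ i ≠ l ∧ j ≠ l) ∨
     (j = l ∧ i ≠ j ∧ i ≠ k ∧ j ≠ k) ∨ (k = l ∧ i ≠ j ∧ i ≠ k ∧ j ≠ k)) ∨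
    ((j = k ∧ k = l) ∨ (i = k ∧ k = l) ∨ (i = j ∧ j = l) ∨ (i = j ∧ j = k) ∨
     (i = j ∧ k = l) ∨ (i = k ∧ j = l) ∨ (i = l ∧ j = k)) := by
  by_cases h1 : i = j <;> by_cases h2 : i = k <;> by_cases h3 : i = l <;>
    by_cases h4 : j = k <;> by_cases h5 : j = l <;> by_cases h6 : k = l <;>
    subst_vars <;> simp_all

theorem abs_mul4_le {a b c d M : ℝ} (hM : 0 ≤ M)
    (ha : |a| ≤ M) (hb : |b| ≤ M) (hc : |c| ≤ M) (hd : |d| ≤ M) :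
    |a * b * c * d| ≤ M ^ 4 := by
  have h1 : |a| * |b| ≤ M * M := mul_le_mul ha hb (abs_nonneg _) hM
  have h2 : |a| * |b| * |c| ≤ M * M * M :=
    mul_le_mul h1 hc (abs_nonneg _) (by positivity)
  have h3 : |a| * |b| * |c| * |d| ≤ M * M * M * M :=
    mul_le_mul h2 hd (abs_nonneg _) (by positivity)
  calc |a * b * c * d| = |a| * |b| * |c| * |d| := by
        rw [abs_mul, abs_mul, abs_mul]
    _ ≤ M * M * M * M := h3
    _ = M ^ 4 := by ring

end Aux

set_option maxHeartbeats 4000000 in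
/-- Lemma (fourth central moment of the HT mean, non-asymptotic form of Lemma A.1):
`E[(N⁻¹ t̂_HT − N⁻¹ t_y)⁴] ≤ (C/λ)⁴ · (1/N³ + 7/N² + 6 M₃/N + M₄)`. -/
theorem ht_fourth_moment_bound
    {Ω : Type*} [MeasurableSpace Ω] (μ : Measure Ω) [IsProbabilityMeasure μ]
    (N : ℕ) (y : Fin N → ℝ) (I : Fin N → Ω → ℝ)
    (hI01 : ∀ k, ∀ ω, I k ω = 0 ∨ I k ω = 1)
    (hImeas : ∀ k, Measurable (I k))
    (π : Fin N → ℝ)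
    (hπ : ∀ k, π k = ∫ ω, I k ω ∂μ)
    (hπmem : ∀ k, π k ∈ Set.Ioc (0 : ℝ) 1)
    (lam : ℝ) (hlam : 0 < lam) (hlamπ : ∀ k, lam ≤ π k)
    (C : ℝ) (hC : 0 < C) (hy : ∀ k, |y k| ≤ C)
    (M3 : ℝ) (hM3 : 0 ≤ M3)
    (hmom3 : ∀ i k l : Fin N, i ≠ k → i ≠ l → k ≠ l →
      |∫ ω, (I i ω - π i) ^ 2 * (I k ω - π k) * (I l ω - π l) ∂μ| ≤ M3)
    (M4 : ℝ) (hM4 : 0 ≤ M4)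
    (hmom4 : ∀ i j k l : Fin N, i ≠ j → i ≠ k → i ≠ l → j ≠ k → j ≠ l → k ≠ l →
      |∫ ω, (I i ω - π i) * (I j ω - π j) * (I k ω - π k) * (I l ω - π l) ∂μ| ≤ M4) :
    (∫ ω, ((N : ℝ)⁻¹ * (∑ k, I k ω * y k / π k) - (N : ℝ)⁻¹ * ∑ k, y k) ^ 4 ∂μ)
      ≤ (C / lam) ^ 4 *
          (1 / (N : ℝ) ^ 3 + 7 / (N : ℝ) ^ 2 + 6 * M3 / (N : ℝ) + M4) := by
  classical
  rcases Nat.eq_zero_or_pos N with rfl | hNpos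
  · simp
    positivity
  have hπpos : ∀ m, 0 < π m := fun m => (hπmem m).1
  have hπle : ∀ m, π m ≤ 1 := fun m => (hπmem m).2
  set a : ℝ := C / lam with ha_def
  have ha : 0 < a := div_pos hC hlam
  -- the centered summands
  set Z : Fin N → Ω → ℝ := fun m ω => (I m ω - π m) * (y m / π m) with hZdef
  have hcle : ∀ m, |y m / π m| ≤ a := by
    intro m
    rw [abs_div, abs_of_pos (hπpos m)]
    exact div_le_div₀ hC.le (hy m) hlam (hlamπ m)
  have hXle : ∀ m ω, |I m ω - π m| ≤ 1 := by
    intro m ω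
    have h1 := hπpos m
    have h2 := hπle m
    rcases hI01 m ω with h | h <;> rw [h, abs_le] <;> constructor <;> linarith
  have hZle : ∀ m ω, |Z m ω| ≤ a := by
    intro m ω
    simp only [hZdef]
    rw [abs_mul]
    calc |I m ω - π m| * |y m / π m| ≤ 1 * a :=
          mul_le_mul (hXle m ω) (hcle m) (abs_nonneg _) zero_le_one
      _ = a := one_mul a
  have hZmeas : ∀ m, Measurable (Z m) := by
    intro m
    simp only [hZdef]
    exact ((hImeas m).sub measurable_const).mul measurable_const
  -- the quadruple product
  set F : (Fin N × Fin N × Fin N × Fin N) → Ω → ℝ :=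
    fun t ω => Z t.2.2.2 ω * Z t.2.2.1 ω * Z t.2.1 ω * Z t.1 ω with hFdef
  have hFb : ∀ (t : Fin N × Fin N × Fin N × Fin N) (ω : Ω), |F t ω| ≤ a ^ 4 := by
    intro t ω
    exact abs_mul4_le ha.le (hZle _ ω) (hZle _ ω) (hZle _ ω) (hZle _ ω)
  have hFmeas : ∀ t : Fin N × Fin N × Fin N × Fin N, Measurable (F t) := by
    intro t
    exact (((hZmeas _).mul (hZmeas _)).mul (hZmeas _)).mul (hZmeas _)
  have hInt : ∀ t : Fin N × Fin N × Fin N × Fin N, Integrable (F t) μ := by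
    intro t
    refine Integrable.mono' (integrable_const (a ^ 4))
      (hFmeas t).aestronglyMeasurable (ae_of_all _ fun ω => ?_)
    rw [Real.norm_eq_abs]
    exact hFb t ω
  -- rewrite the integrand
  have hfun : (fun ω => ((N : ℝ)⁻¹ * (∑ k, I k ω * y k / π k)
        - (N : ℝ)⁻¹ * ∑ k, y k) ^ 4)
      = fun ω => ((N : ℝ)⁻¹) ^ 4 * ∑ t : Fin N × Fin N × Fin N × Fin N, F t ω := by
    funext ω
    have h1 : (∑ k, I k ω * y k / π k) - (∑ k, y k) = ∑ k, Z k ω := by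
      rw [← Finset.sum_sub_distrib]
      refine Finset.sum_congr rfl fun k _ => ?_
      have hk : π k ≠ 0 := (hπpos k).ne'
      simp only [hZdef]
      field_simp
    have h2 : (∑ k, Z k ω) ^ 4 = ∑ t : Fin N × Fin N × Fin N × Fin N, F t ω := by
      simp only [hFdef, Fintype.sum_prod_type, show (4:ℕ) = 3+1 from rfl,
        show (3:ℕ) = 2+1 from rfl, pow_succ, pow_zero, one_mul,
        Finset.sum_mul, Finset.mul_sum]
    calc ((N : ℝ)⁻¹ * (∑ k, I k ω * y k / π k) - (N : ℝ)⁻¹ * ∑ k, y k) ^ 4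
        = ((N : ℝ)⁻¹) ^ 4 * ((∑ k, I k ω * y k / π k) - (∑ k, y k)) ^ 4 := by ring
      _ = ((N : ℝ)⁻¹) ^ 4 * ∑ t : Fin N × Fin N × Fin N × Fin N, F t ω := by
          rw [h1, h2]
  -- per-term bounds
  have hterm1 : ∀ t : Fin N × Fin N × Fin N × Fin N, |∫ ω, F t ω ∂μ| ≤ a ^ 4 := by
    intro t
    have := norm_integral_le_of_norm_le_const (μ := μ) (f := F t) (C := a ^ 4)
      (ae_of_all _ fun ω => by rw [Real.norm_eq_abs]; exact hFb t ω)
    simpa using this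
  -- predicates
  set P4 : (Fin N × Fin N × Fin N × Fin N) → Prop := fun t =>
    t.1 ≠ t.2.1 ∧ t.1 ≠ t.2.2.1 ∧ t.1 ≠ t.2.2.2 ∧ t.2.1 ≠ t.2.2.1 ∧
    t.2.1 ≠ t.2.2.2 ∧ t.2.2.1 ≠ t.2.2.2 with hP4def
  set P3 : (Fin N × Fin N × Fin N × Fin N) → Prop := fun t =>
    (t.1 = t.2.1 ∧ t.1 ≠ t.2.2.1 ∧ t.1 ≠ t.2.2.2 ∧ t.2.2.1 ≠ t.2.2.2) ∨
    (t.1 = t.2.2.1 ∧ t.1 ≠ t.2.1 ∧ t.1 ≠ t.2.2.2 ∧ t.2.1 ≠ t.2.2.2) ∨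
    (t.1 = t.2.2.2 ∧ t.1 ≠ t.2.1 ∧ t.1 ≠ t.2.2.1 ∧ t.2.1 ≠ t.2.2.1) ∨
    (t.2.1 = t.2.2.1 ∧ t.1 ≠ t.2.1 ∧ t.1 ≠ t.2.2.2 ∧ t.2.1 ≠ t.2.2.2) ∨
    (t.2.1 = t.2.2.2 ∧ t.1 ≠ t.2.1 ∧ t.1 ≠ t.2.2.1 ∧ t.2.1 ≠ t.2.2.1) ∨
    (t.2.2.1 = t.2.2.2 ∧ t.1 ≠ t.2.1 ∧ t.1 ≠ t.2.2.1 ∧ t.2.1 ≠ t.2.2.1)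
    with hP3def
  have hterm4 : ∀ t : Fin N × Fin N × Fin N × Fin N,
      P4 t → |∫ ω, F t ω ∂μ| ≤ a ^ 4 * M4 := by
    rintro ⟨i, j, k, l⟩ h
    simp only [hP4def] at h
    obtain ⟨h1, h2, h3, h4, h5, h6⟩ := h
    have key : ∫ ω, F (i, j, k, l) ω ∂μ =
        (y i / π i * (y j / π j) * (y k / π k) * (y l / π l)) *
        ∫ ω, (I i ω - π i) * (I j ω - π j) * (I k ω - π k) * (I l ω - π l) ∂μ := by
      rw [← integral_const_mul]
      refine integral_congr_ae (Filter.EventuallyEq.of_eq (funext fun ω => ?_))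
      simp only [hFdef, hZdef]
      ring
    rw [key, abs_mul]
    exact mul_le_mul
      (abs_mul4_le ha.le (hcle i) (hcle j) (hcle k) (hcle l))
      (hmom4 i j k l h1 h2 h3 h4 h5 h6) (abs_nonneg _) (by positivity)
  have hterm3 : ∀ t : Fin N × Fin N × Fin N × Fin N,
      P3 t → |∫ ω, F t ω ∂μ| ≤ a ^ 4 * M3 := by
    rintro ⟨i, j, k, l⟩ h
    simp only [hP3def] at h
    rcases h with ⟨rfl, h1, h2, h3⟩ | ⟨rfl, h1, h2, h3⟩ | ⟨rfl, h1, h2, h3⟩ |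
      ⟨rfl, h1, h2, h3⟩ | ⟨rfl, h1, h2, h3⟩ | ⟨rfl, h1, h2, h3⟩
    · -- i = j
      have key : ∫ ω, F (i, i, k, l) ω ∂μ =
          (y i / π i * (y i / π i) * (y k / π k) * (y l / π l)) *
          ∫ ω, (I i ω - π i) ^ 2 * (I k ω - π k) * (I l ω - π l) ∂μ := by
        rw [← integral_const_mul]
        refine integral_congr_ae (Filter.EventuallyEq.of_eq (funext fun ω => ?_))
        simp only [hFdef, hZdef]; ring
      rw [key, abs_mul]
      exact mul_le_mul (abs_mul4_le ha.le (hcle i) (hcle i) (hcle k) (hcle l))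
        (hmom3 i k l h1 h2 h3) (abs_nonneg _) (by positivity)
    · -- i = k
      have key : ∫ ω, F (i, j, i, l) ω ∂μ =
          (y i / π i * (y i / π i) * (y j / π j) * (y l / π l)) *
          ∫ ω, (I i ω - π i) ^ 2 * (I j ω - π j) * (I l ω - π l) ∂μ := by
        rw [← integral_const_mul]
        refine integral_congr_ae (Filter.EventuallyEq.of_eq (funext fun ω => ?_))
        simp only [hFdef, hZdef]; ring
      rw [key, abs_mul]
      exact mul_le_mul (abs_mul4_le ha.le (hcle i) (hcle i) (hcle j) (hcle l))
        (hmom3 i j l h1 h2 h3) (abs_nonneg _) (by positivity)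
    · -- i = l
      have key : ∫ ω, F (i, j, k, i) ω ∂μ =
          (y i / π i * (y i / π i) * (y j / π j) * (y k / π k)) *
          ∫ ω, (I i ω - π i) ^ 2 * (I j ω - π j) * (I k ω - π k) ∂μ := by
        rw [← integral_const_mul]
        refine integral_congr_ae (Filter.EventuallyEq.of_eq (funext fun ω => ?_))
        simp only [hFdef, hZdef]; ring
      rw [key, abs_mul]
      exact mul_le_mul (abs_mul4_le ha.le (hcle i) (hcle i) (hcle j) (hcle k))
        (hmom3 i j k h1 h2 h3) (abs_nonneg _) (by positivity)
    · -- j = k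
      have key : ∫ ω, F (i, j, j, l) ω ∂μ =
          (y j / π j * (y j / π j) * (y i / π i) * (y l / π l)) *
          ∫ ω, (I j ω - π j) ^ 2 * (I i ω - π i) * (I l ω - π l) ∂μ := by
        rw [← integral_const_mul]
        refine integral_congr_ae (Filter.EventuallyEq.of_eq (funext fun ω => ?_))
        simp only [hFdef, hZdef]; ring
      rw [key, abs_mul]
      exact mul_le_mul (abs_mul4_le ha.le (hcle j) (hcle j) (hcle i) (hcle l))
        (hmom3 j i l h1.symm h3 h2) (abs_nonneg _) (by positivity)
    · -- j = l
      have key : ∫ ω, F (i, j, k, j) ω ∂μ =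
          (y j / π j * (y j / π j) * (y i / π i) * (y k / π k)) *
          ∫ ω, (I j ω - π j) ^ 2 * (I i ω - π i) * (I k ω - π k) ∂μ := by
        rw [← integral_const_mul]
        refine integral_congr_ae (Filter.EventuallyEq.of_eq (funext fun ω => ?_))
        simp only [hFdef, hZdef]; ring
      rw [key, abs_mul]
      exact mul_le_mul (abs_mul4_le ha.le (hcle j) (hcle j) (hcle i) (hcle k))
        (hmom3 j i k h1.symm h3 h2) (abs_nonneg _) (by positivity)
    · -- k = l
      have key : ∫ ω, F (i, j, k, k) ω ∂μ =
          (y k / π k * (y k / π k) * (y i / π i) * (y j / π j)) *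
          ∫ ω, (I k ω - π k) ^ 2 * (I i ω - π i) * (I j ω - π j) ∂μ := by
        rw [← integral_const_mul]
        refine integral_congr_ae (Filter.EventuallyEq.of_eq (funext fun ω => ?_))
        simp only [hFdef, hZdef]; ring
      rw [key, abs_mul]
      exact mul_le_mul (abs_mul4_le ha.le (hcle k) (hcle k) (hcle i) (hcle j))
        (hmom3 k i j h2.symm h3.symm h1) (abs_nonneg _) (by positivity)
  -- counting helpers
  have cardAux3 : ∀ (P : (Fin N × Fin N × Fin N × Fin N) → Prop) [DecidablePred P]
      (f : Fin N × Fin N × Fin N → Fin N × Fin N × Fin N × Fin N),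
      Set.SurjOn f ↑(Finset.univ : Finset (Fin N × Fin N × Fin N))
        ↑(Finset.univ.filter P) → (Finset.univ.filter P).card ≤ N ^ 3 := by
    intro P _ f hf
    calc (Finset.univ.filter P).card
        ≤ (Finset.univ : Finset (Fin N × Fin N × Fin N)).card :=
          Finset.card_le_card_of_surjOn f hf
      _ = N ^ 3 := by simp [Fintype.card_prod]; ring
  have cardAux2 : ∀ (P : (Fin N × Fin N × Fin N × Fin N) → Prop) [DecidablePred P]
      (f : Fin N × Fin N → Fin N × Fin N × Fin N × Fin N),
      Set.SurjOn f ↑(Finset.univ : Finset (Fin N × Fin N))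
        ↑(Finset.univ.filter P) → (Finset.univ.filter P).card ≤ N ^ 2 := by
    intro P _ f hf
    calc (Finset.univ.filter P).card
        ≤ (Finset.univ : Finset (Fin N × Fin N)).card :=
          Finset.card_le_card_of_surjOn f hf
      _ = N ^ 2 := by simp [Fintype.card_prod]; ring
  -- cardinalities of pair-equality filters
  have hcE1 : (Finset.univ.filter
      (fun t : Fin N × Fin N × Fin N × Fin N => t.1 = t.2.1)).card ≤ N ^ 3 := by
    refine cardAux3 _ (fun x => (x.1, x.1, x.2.1, x.2.2)) ?_
    intro t ht
    simp only [Finset.coe_filter, Set.mem_setOf_eq, Finset.mem_univ, true_and] at ht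
    exact ⟨(t.1, t.2.2.1, t.2.2.2), by simp, by obtain ⟨p, q, r, s⟩ := t; dsimp only at ht ⊢; simp only [ht]⟩
  have hcE2 : (Finset.univ.filter
      (fun t : Fin N × Fin N × Fin N × Fin N => t.1 = t.2.2.1)).card ≤ N ^ 3 := by
    refine cardAux3 _ (fun x => (x.1, x.2.1, x.1, x.2.2)) ?_
    intro t ht
    simp only [Finset.coe_filter, Set.mem_setOf_eq, Finset.mem_univ, true_and] at ht
    exact ⟨(t.1, t.2.1, t.2.2.2), by simp, by obtain ⟨p, q, r, s⟩ := t; dsimp only at ht ⊢; simp only [ht]⟩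
  have hcE3 : (Finset.univ.filter
      (fun t : Fin N × Fin N × Fin N × Fin N => t.1 = t.2.2.2)).card ≤ N ^ 3 := by
    refine cardAux3 _ (fun x => (x.1, x.2.1, x.2.2, x.1)) ?_
    intro t ht
    simp only [Finset.coe_filter, Set.mem_setOf_eq, Finset.mem_univ, true_and] at ht
    exact ⟨(t.1, t.2.1, t.2.2.1), by simp, by obtain ⟨p, q, r, s⟩ := t; dsimp only at ht ⊢; simp only [ht]⟩
  have hcE4 : (Finset.univ.filter
      (fun t : Fin N × Fin N × Fin N × Fin N => t.2.1 = t.2.2.1)).card ≤ N ^ 3 := by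
    refine cardAux3 _ (fun x => (x.1, x.2.1, x.2.1, x.2.2)) ?_
    intro t ht
    simp only [Finset.coe_filter, Set.mem_setOf_eq, Finset.mem_univ, true_and] at ht
    exact ⟨(t.1, t.2.1, t.2.2.2), by simp, by obtain ⟨p, q, r, s⟩ := t; dsimp only at ht ⊢; simp only [ht]⟩
  have hcE5 : (Finset.univ.filter
      (fun t : Fin N × Fin N × Fin N × Fin N => t.2.1 = t.2.2.2)).card ≤ N ^ 3 := by
    refine cardAux3 _ (fun x => (x.1, x.2.1, x.2.2, x.2.1)) ?_
    intro t ht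
    simp only [Finset.coe_filter, Set.mem_setOf_eq, Finset.mem_univ, true_and] at ht
    exact ⟨(t.1, t.2.1, t.2.2.1), by simp, by obtain ⟨p, q, r, s⟩ := t; dsimp only at ht ⊢; simp only [ht]⟩
  have hcE6 : (Finset.univ.filter
      (fun t : Fin N × Fin N × Fin N × Fin N => t.2.2.1 = t.2.2.2)).card ≤ N ^ 3 := by
    refine cardAux3 _ (fun x => (x.1, x.2.1, x.2.2, x.2.2)) ?_
    intro t ht
    simp only [Finset.coe_filter, Set.mem_setOf_eq, Finset.mem_univ, true_and] at ht
    exact ⟨(t.1, t.2.1, t.2.2.1), by simp, by obtain ⟨p, q, r, s⟩ := t; dsimp only at ht ⊢; simp only [ht]⟩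
  -- cardinalities of two-block filters
  have hcA1 : (Finset.univ.filter
      (fun t : Fin N × Fin N × Fin N × Fin N => t.2.1 = t.2.2.1 ∧ t.2.2.1 = t.2.2.2)).card ≤ N ^ 2 := by
    refine cardAux2 _ (fun x => (x.1, x.2, x.2, x.2)) ?_
    intro t ht
    simp only [Finset.coe_filter, Set.mem_setOf_eq, Finset.mem_univ, true_and] at ht
    exact ⟨(t.1, t.2.1), by simp, by obtain ⟨p, q, r, s⟩ := t; dsimp only at ht ⊢; simp only [ht]⟩
  have hcA2 : (Finset.univ.filter
      (fun t : Fin N × Fin N × Fin N × Fin N => t.1 = t.2.2.1 ∧ t.2.2.1 = t.2.2.2)).card ≤ N ^ 2 := by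
    refine cardAux2 _ (fun x => (x.1, x.2, x.1, x.1)) ?_
    intro t ht
    simp only [Finset.coe_filter, Set.mem_setOf_eq, Finset.mem_univ, true_and] at ht
    exact ⟨(t.1, t.2.1), by simp, by obtain ⟨p, q, r, s⟩ := t; dsimp only at ht ⊢; simp only [ht]⟩
  have hcA3 : (Finset.univ.filter
      (fun t : Fin N × Fin N × Fin N × Fin N => t.1 = t.2.1 ∧ t.2.1 = t.2.2.2)).card ≤ N ^ 2 := by
    refine cardAux2 _ (fun x => (x.1, x.1, x.2, x.1)) ?_
    intro t ht
    simp only [Finset.coe_filter, Set.mem_setOf_eq, Finset.mem_univ, true_and] at ht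
    exact ⟨(t.1, t.2.2.1), by simp, by obtain ⟨p, q, r, s⟩ := t; dsimp only at ht ⊢; simp only [ht]⟩
  have hcA4 : (Finset.univ.filter
      (fun t : Fin N × Fin N × Fin N × Fin N => t.1 = t.2.1 ∧ t.2.1 = t.2.2.1)).card ≤ N ^ 2 := by
    refine cardAux2 _ (fun x => (x.1, x.1, x.1, x.2)) ?_
    intro t ht
    simp only [Finset.coe_filter, Set.mem_setOf_eq, Finset.mem_univ, true_and] at ht
    exact ⟨(t.1, t.2.2.2), by simp, by obtain ⟨p, q, r, s⟩ := t; dsimp only at ht ⊢; simp only [ht]⟩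
  have hcA5 : (Finset.univ.filter
      (fun t : Fin N × Fin N × Fin N × Fin N => t.1 = t.2.1 ∧ t.2.2.1 = t.2.2.2)).card ≤ N ^ 2 := by
    refine cardAux2 _ (fun x => (x.1, x.1, x.2, x.2)) ?_
    intro t ht
    simp only [Finset.coe_filter, Set.mem_setOf_eq, Finset.mem_univ, true_and] at ht
    exact ⟨(t.1, t.2.2.1), by simp, by obtain ⟨p, q, r, s⟩ := t; dsimp only at ht ⊢; simp only [ht]⟩
  have hcA6 : (Finset.univ.filter
      (fun t : Fin N × Fin N × Fin N × Fin N => t.1 = t.2.2.1 ∧ t.2.1 = t.2.2.2)).card ≤ N ^ 2 := by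
    refine cardAux2 _ (fun x => (x.1, x.2, x.1, x.2)) ?_
    intro t ht
    simp only [Finset.coe_filter, Set.mem_setOf_eq, Finset.mem_univ, true_and] at ht
    exact ⟨(t.1, t.2.1), by simp, by obtain ⟨p, q, r, s⟩ := t; dsimp only at ht ⊢; simp only [ht]⟩
  have hcA7 : (Finset.univ.filter
      (fun t : Fin N × Fin N × Fin N × Fin N => t.1 = t.2.2.2 ∧ t.2.1 = t.2.2.1)).card ≤ N ^ 2 := by
    refine cardAux2 _ (fun x => (x.1, x.2, x.2, x.1)) ?_
    intro t ht
    simp only [Finset.coe_filter, Set.mem_setOf_eq, Finset.mem_univ, true_and] at ht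
    exact ⟨(t.1, t.2.1), by simp, by obtain ⟨p, q, r, s⟩ := t; dsimp only at ht ⊢; simp only [ht]⟩
  -- the middle class
  set S2 := (Finset.univ.filter (fun t : Fin N × Fin N × Fin N × Fin N => ¬ P4 t)).filter P3
    with hS2def
  set S3 := (Finset.univ.filter (fun t : Fin N × Fin N × Fin N × Fin N => ¬ P4 t)).filter
    (fun t => ¬ P3 t) with hS3def
  have hS2card : S2.card ≤ 6 * N ^ 3 := by
    have hsub : S2 ⊆
        (Finset.univ.filter (fun t : Fin N × Fin N × Fin N × Fin N => t.1 = t.2.1)) ∪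
        (Finset.univ.filter (fun t : Fin N × Fin N × Fin N × Fin N => t.1 = t.2.2.1)) ∪
        (Finset.univ.filter (fun t : Fin N × Fin N × Fin N × Fin N => t.1 = t.2.2.2)) ∪
        (Finset.univ.filter (fun t : Fin N × Fin N × Fin N × Fin N => t.2.1 = t.2.2.1)) ∪
        (Finset.univ.filter (fun t : Fin N × Fin N × Fin N × Fin N => t.2.1 = t.2.2.2)) ∪
        (Finset.univ.filter (fun t : Fin N × Fin N × Fin N × Fin N => t.2.2.1 = t.2.2.2)) := by
      intro t ht
      have h3 : P3 t := (Finset.mem_filter.mp ht).2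
      simp only [hP3def] at h3
      simp only [Finset.mem_union, Finset.mem_filter, Finset.mem_univ, true_and]
      rcases h3 with ⟨h,-⟩|⟨h,-⟩|⟨h,-⟩|⟨h,-⟩|⟨h,-⟩|⟨h,-⟩
      · exact Or.inl (Or.inl (Or.inl (Or.inl (Or.inl h))))
      · exact Or.inl (Or.inl (Or.inl (Or.inl (Or.inr h))))
      · exact Or.inl (Or.inl (Or.inl (Or.inr h)))
      · exact Or.inl (Or.inl (Or.inr h))
      · exact Or.inl (Or.inr h)
      · exact Or.inr h
    have u1 := Finset.card_union_le
      ((Finset.univ.filter (fun t : Fin N × Fin N × Fin N × Fin N => t.1 = t.2.1)) ∪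
       (Finset.univ.filter (fun t : Fin N × Fin N × Fin N × Fin N => t.1 = t.2.2.1)) ∪
       (Finset.univ.filter (fun t : Fin N × Fin N × Fin N × Fin N => t.1 = t.2.2.2)) ∪
       (Finset.univ.filter (fun t : Fin N × Fin N × Fin N × Fin N => t.2.1 = t.2.2.1)) ∪
       (Finset.univ.filter (fun t : Fin N × Fin N × Fin N × Fin N => t.2.1 = t.2.2.2)))
      (Finset.univ.filter (fun t : Fin N × Fin N × Fin N × Fin N => t.2.2.1 = t.2.2.2))
    have u2 := Finset.card_union_le
      ((Finset.univ.filter (fun t : Fin N × Fin N × Fin N × Fin N => t.1 = t.2.1)) ∪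
       (Finset.univ.filter (fun t : Fin N × Fin N × Fin N × Fin N => t.1 = t.2.2.1)) ∪
       (Finset.univ.filter (fun t : Fin N × Fin N × Fin N × Fin N => t.1 = t.2.2.2)) ∪
       (Finset.univ.filter (fun t : Fin N × Fin N × Fin N × Fin N => t.2.1 = t.2.2.1)))
      (Finset.univ.filter (fun t : Fin N × Fin N × Fin N × Fin N => t.2.1 = t.2.2.2))
    have u3 := Finset.card_union_le
      ((Finset.univ.filter (fun t : Fin N × Fin N × Fin N × Fin N => t.1 = t.2.1)) ∪
       (Finset.univ.filter (fun t : Fin N × Fin N × Fin N × Fin N => t.1 = t.2.2.1)) ∪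
       (Finset.univ.filter (fun t : Fin N × Fin N × Fin N × Fin N => t.1 = t.2.2.2)))
      (Finset.univ.filter (fun t : Fin N × Fin N × Fin N × Fin N => t.2.1 = t.2.2.1))
    have u4 := Finset.card_union_le
      ((Finset.univ.filter (fun t : Fin N × Fin N × Fin N × Fin N => t.1 = t.2.1)) ∪
       (Finset.univ.filter (fun t : Fin N × Fin N × Fin N × Fin N => t.1 = t.2.2.1)))
      (Finset.univ.filter (fun t : Fin N × Fin N × Fin N × Fin N => t.1 = t.2.2.2))
    have u5 := Finset.card_union_le
      (Finset.univ.filter (fun t : Fin N × Fin N × Fin N × Fin N => t.1 = t.2.1))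
      (Finset.univ.filter (fun t : Fin N × Fin N × Fin N × Fin N => t.1 = t.2.2.1))
    have hs := Finset.card_le_card hsub
    omega
  have hS3card : S3.card ≤ 7 * N ^ 2 := by
    have hsub : S3 ⊆
        (Finset.univ.filter (fun t : Fin N × Fin N × Fin N × Fin N => t.2.1 = t.2.2.1 ∧ t.2.2.1 = t.2.2.2)) ∪
        (Finset.univ.filter (fun t : Fin N × Fin N × Fin N × Fin N => t.1 = t.2.2.1 ∧ t.2.2.1 = t.2.2.2)) ∪
        (Finset.univ.filter (fun t : Fin N × Fin N × Fin N × Fin N => t.1 = t.2.1 ∧ t.2.1 = t.2.2.2)) ∪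
        (Finset.univ.filter (fun t : Fin N × Fin N × Fin N × Fin N => t.1 = t.2.1 ∧ t.2.1 = t.2.2.1)) ∪
        (Finset.univ.filter (fun t : Fin N × Fin N × Fin N × Fin N => t.1 = t.2.1 ∧ t.2.2.1 = t.2.2.2)) ∪
        (Finset.univ.filter (fun t : Fin N × Fin N × Fin N × Fin N => t.1 = t.2.2.1 ∧ t.2.1 = t.2.2.2)) ∪
        (Finset.univ.filter (fun t : Fin N × Fin N × Fin N × Fin N => t.1 = t.2.2.2 ∧ t.2.1 = t.2.2.1)) := by
      intro t ht
      have h4 : ¬ P4 t := (Finset.mem_filter.mp ((Finset.mem_filter.mp ht).1)).2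
      have h3 : ¬ P3 t := (Finset.mem_filter.mp ht).2
      simp only [hP4def] at h4
      simp only [hP3def] at h3
      rcases classify4 t.1 t.2.1 t.2.2.1 t.2.2.2 with hc | hc | hc
      · exact absurd hc h4
      · exact absurd hc h3
      · simp only [Finset.mem_union, Finset.mem_filter, Finset.mem_univ, true_and]
        rcases hc with h|h|h|h|h|h|h
        · exact Or.inl (Or.inl (Or.inl (Or.inl (Or.inl (Or.inl h)))))
        · exact Or.inl (Or.inl (Or.inl (Or.inl (Or.inl (Or.inr h)))))
        · exact Or.inl (Or.inl (Or.inl (Or.inl (Or.inr h))))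
        · exact Or.inl (Or.inl (Or.inl (Or.inr h)))
        · exact Or.inl (Or.inl (Or.inr h))
        · exact Or.inl (Or.inr h)
        · exact Or.inr h
    have u1 := Finset.card_union_le
      ((Finset.univ.filter (fun t : Fin N × Fin N × Fin N × Fin N => t.2.1 = t.2.2.1 ∧ t.2.2.1 = t.2.2.2)) ∪
       (Finset.univ.filter (fun t : Fin N × Fin N × Fin N × Fin N => t.1 = t.2.2.1 ∧ t.2.2.1 = t.2.2.2)) ∪
       (Finset.univ.filter (fun t : Fin N × Fin N × Fin N × Fin N => t.1 = t.2.1 ∧ t.2.1 = t.2.2.2)) ∪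
       (Finset.univ.filter (fun t : Fin N × Fin N × Fin N × Fin N => t.1 = t.2.1 ∧ t.2.1 = t.2.2.1)) ∪
       (Finset.univ.filter (fun t : Fin N × Fin N × Fin N × Fin N => t.1 = t.2.1 ∧ t.2.2.1 = t.2.2.2)) ∪
       (Finset.univ.filter (fun t : Fin N × Fin N × Fin N × Fin N => t.1 = t.2.2.1 ∧ t.2.1 = t.2.2.2)))
      (Finset.univ.filter (fun t : Fin N × Fin N × Fin N × Fin N => t.1 = t.2.2.2 ∧ t.2.1 = t.2.2.1))
    have u2 := Finset.card_union_le
      ((Finset.univ.filter (fun t : Fin N × Fin N × Fin N × Fin N => t.2.1 = t.2.2.1 ∧ t.2.2.1 = t.2.2.2)) ∪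
       (Finset.univ.filter (fun t : Fin N × Fin N × Fin N × Fin N => t.1 = t.2.2.1 ∧ t.2.2.1 = t.2.2.2)) ∪
       (Finset.univ.filter (fun t : Fin N × Fin N × Fin N × Fin N => t.1 = t.2.1 ∧ t.2.1 = t.2.2.2)) ∪
       (Finset.univ.filter (fun t : Fin N × Fin N × Fin N × Fin N => t.1 = t.2.1 ∧ t.2.1 = t.2.2.1)) ∪
       (Finset.univ.filter (fun t : Fin N × Fin N × Fin N × Fin N => t.1 = t.2.1 ∧ t.2.2.1 = t.2.2.2)))
      (Finset.univ.filter (fun t : Fin N × Fin N × Fin N × Fin N => t.1 = t.2.2.1 ∧ t.2.1 = t.2.2.2))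
    have u3 := Finset.card_union_le
      ((Finset.univ.filter (fun t : Fin N × Fin N × Fin N × Fin N => t.2.1 = t.2.2.1 ∧ t.2.2.1 = t.2.2.2)) ∪
       (Finset.univ.filter (fun t : Fin N × Fin N × Fin N × Fin N => t.1 = t.2.2.1 ∧ t.2.2.1 = t.2.2.2)) ∪
       (Finset.univ.filter (fun t : Fin N × Fin N × Fin N × Fin N => t.1 = t.2.1 ∧ t.2.1 = t.2.2.2)) ∪
       (Finset.univ.filter (fun t : Fin N × Fin N × Fin N × Fin N => t.1 = t.2.1 ∧ t.2.1 = t.2.2.1)))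
      (Finset.univ.filter (fun t : Fin N × Fin N × Fin N × Fin N => t.1 = t.2.1 ∧ t.2.2.1 = t.2.2.2))
    have u4 := Finset.card_union_le
      ((Finset.univ.filter (fun t : Fin N × Fin N × Fin N × Fin N => t.2.1 = t.2.2.1 ∧ t.2.2.1 = t.2.2.2)) ∪
       (Finset.univ.filter (fun t : Fin N × Fin N × Fin N × Fin N => t.1 = t.2.2.1 ∧ t.2.2.1 = t.2.2.2)) ∪
       (Finset.univ.filter (fun t : Fin N × Fin N × Fin N × Fin N => t.1 = t.2.1 ∧ t.2.1 = t.2.2.2)))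
      (Finset.univ.filter (fun t : Fin N × Fin N × Fin N × Fin N => t.1 = t.2.1 ∧ t.2.1 = t.2.2.1))
    have u5 := Finset.card_union_le
      ((Finset.univ.filter (fun t : Fin N × Fin N × Fin N × Fin N => t.2.1 = t.2.2.1 ∧ t.2.2.1 = t.2.2.2)) ∪
       (Finset.univ.filter (fun t : Fin N × Fin N × Fin N × Fin N => t.1 = t.2.2.1 ∧ t.2.2.1 = t.2.2.2)))
      (Finset.univ.filter (fun t : Fin N × Fin N × Fin N × Fin N => t.1 = t.2.1 ∧ t.2.1 = t.2.2.2))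
    have u6 := Finset.card_union_le
      (Finset.univ.filter (fun t : Fin N × Fin N × Fin N × Fin N => t.2.1 = t.2.2.1 ∧ t.2.2.1 = t.2.2.2))
      (Finset.univ.filter (fun t : Fin N × Fin N × Fin N × Fin N => t.1 = t.2.2.1 ∧ t.2.2.1 = t.2.2.2))
    have hs := Finset.card_le_card hsub
    omega
  -- sum bounds
  have hB1 : ∑ t ∈ Finset.univ.filter P4, |∫ ω, F t ω ∂μ| ≤ (N:ℝ)^4 * (a^4 * M4) := by
    have hcard : (Finset.univ.filter P4).card ≤ N ^ 4 := by
      calc (Finset.univ.filter P4).card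
          ≤ (Finset.univ : Finset (Fin N × Fin N × Fin N × Fin N)).card :=
            Finset.card_filter_le _ _
        _ = N ^ 4 := by simp [Fintype.card_prod]; ring
    calc ∑ t ∈ Finset.univ.filter P4, |∫ ω, F t ω ∂μ|
        ≤ (Finset.univ.filter P4).card • (a^4 * M4) :=
          Finset.sum_le_card_nsmul _ _ _ (fun t ht => hterm4 t (Finset.mem_filter.mp ht).2)
      _ = ((Finset.univ.filter P4).card : ℝ) * (a^4 * M4) := nsmul_eq_mul _ _
      _ ≤ (N:ℝ)^4 * (a^4 * M4) := by
          have hc' : ((Finset.univ.filter P4).card : ℝ) ≤ (N:ℝ)^4 := by exact_mod_cast hcard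
          exact mul_le_mul_of_nonneg_right hc' (by positivity)
  have hB2 : ∑ t ∈ S2, |∫ ω, F t ω ∂μ| ≤ 6 * (N:ℝ)^3 * (a^4 * M3) := by
    calc ∑ t ∈ S2, |∫ ω, F t ω ∂μ|
        ≤ S2.card • (a^4 * M3) :=
          Finset.sum_le_card_nsmul _ _ _ (fun t ht => hterm3 t (Finset.mem_filter.mp ht).2)
      _ = (S2.card : ℝ) * (a^4 * M3) := nsmul_eq_mul _ _
      _ ≤ 6 * (N:ℝ)^3 * (a^4 * M3) := by
          have hc' : (S2.card : ℝ) ≤ 6 * (N:ℝ)^3 := by exact_mod_cast hS2card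
          exact mul_le_mul_of_nonneg_right hc' (by positivity)
  have hB3 : ∑ t ∈ S3, |∫ ω, F t ω ∂μ| ≤ 7 * (N:ℝ)^2 * (a^4) := by
    calc ∑ t ∈ S3, |∫ ω, F t ω ∂μ|
        ≤ S3.card • (a^4) :=
          Finset.sum_le_card_nsmul _ _ _ (fun t _ => hterm1 t)
      _ = (S3.card : ℝ) * (a^4) := nsmul_eq_mul _ _
      _ ≤ 7 * (N:ℝ)^2 * (a^4) := by
          have hc' : (S3.card : ℝ) ≤ 7 * (N:ℝ)^2 := by exact_mod_cast hS3card
          exact mul_le_mul_of_nonneg_right hc' (by positivity)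
  -- split the total sum
  have e1 : ∑ t ∈ Finset.univ.filter P4, |∫ ω, F t ω ∂μ|
      + ∑ t ∈ Finset.univ.filter (fun t => ¬ P4 t), |∫ ω, F t ω ∂μ|
      = ∑ t : Fin N × Fin N × Fin N × Fin N, |∫ ω, F t ω ∂μ| :=
    Finset.sum_filter_add_sum_filter_not _ _ _
  have e2 : ∑ t ∈ S2, |∫ ω, F t ω ∂μ| + ∑ t ∈ S3, |∫ ω, F t ω ∂μ|
      = ∑ t ∈ Finset.univ.filter (fun t => ¬ P4 t), |∫ ω, F t ω ∂μ| :=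
    Finset.sum_filter_add_sum_filter_not _ _ _
  have htotal : ∑ t : Fin N × Fin N × Fin N × Fin N, |∫ ω, F t ω ∂μ|
      ≤ (N:ℝ)^4 * (a^4 * M4) + (6 * (N:ℝ)^3 * (a^4 * M3) + 7 * (N:ℝ)^2 * (a^4)) := by
    rw [← e1, ← e2]
    exact add_le_add hB1 (add_le_add hB2 hB3)
  -- final assembly
  have hn0 : (0:ℝ) < (N:ℝ) := by exact_mod_cast hNpos
  calc (∫ ω, ((N : ℝ)⁻¹ * (∑ k, I k ω * y k / π k) - (N : ℝ)⁻¹ * ∑ k, y k) ^ 4 ∂μ)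
      = ((N:ℝ)⁻¹)^4 * ∑ t : Fin N × Fin N × Fin N × Fin N, ∫ ω, F t ω ∂μ := by
        rw [hfun, integral_const_mul, integral_finset_sum _ (fun t _ => hInt t)]
    _ ≤ ((N:ℝ)⁻¹)^4 * ∑ t : Fin N × Fin N × Fin N × Fin N, |∫ ω, F t ω ∂μ| := by
        refine mul_le_mul_of_nonneg_left ?_ (by positivity)
        exact Finset.sum_le_sum fun t _ => le_abs_self _
    _ ≤ ((N:ℝ)⁻¹)^4 * ((N:ℝ)^4 * (a^4 * M4) + (6 * (N:ℝ)^3 * (a^4 * M3) + 7 * (N:ℝ)^2 * (a^4))) :=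
        mul_le_mul_of_nonneg_left htotal (by positivity)
    _ = a^4 * (7/(N:ℝ)^2 + 6*M3/(N:ℝ) + M4) := by
        field_simp
        ring
    _ ≤ a^4 * (1/(N:ℝ)^3 + 7/(N:ℝ)^2 + 6*M3/(N:ℝ) + M4) := by
        refine mul_le_mul_of_nonneg_left ?_ (by positivity)
        have h0 : (0:ℝ) < 1/(N:ℝ)^3 := by positivity
        linarith
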